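/- Under the assumptions of the reduction theorem (M = C C* closed range admissible preconditioner, M⁻¹A M-monotone, zer A ≠ ∅), the fixed points satisfy C*(Fix T) = Fix T̃, where T = (M+A)⁻¹M and T̃ = C*(M+A)⁻¹C. Moreover, if w ∈ Fix T̃ then u := (M+A)⁻¹C w ∈ Fix T and C* u = w. -/

import Mathlib

/-- `C* (Fix T) = Fix T̃`, and for `w ∈ Fix T̃`, `u := (M+A)⁻¹ C w ∈ Fix T` with `C* u = w`. -/
theorem stmt11 {H D : Type} [NormedAddCommGroup H] [InnerProductSpace ℝ H] [CompleteSpace H]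
    [NormedAddCommGroup D] [InnerProductSpace ℝ D] [CompleteSpace D]
    (A : Set (H × H)) (M : H →L[ℝ] H) (C : D →L[ℝ] H)
    (hC : Function.Injective C)
    (hCsurj : Function.Surjective (ContinuousLinearMap.adjoint C))
    (hM : M = C ∘L (ContinuousLinearMap.adjoint C))
    -- `J = (M+A)⁻¹`, single-valued with full domain (admissibility)
    (J : H → H)
    (hJ : ∀ v : H, (J v, v - M (J v)) ∈ A)
    (hJuniq : ∀ v w : H, (w, v - M w) ∈ A → w = J v)
    -- `M⁻¹A` is `M`-monotone
    (hmono : ∀ u v u' v' : H, (u, M v) ∈ A → (u', M v') ∈ A →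
        0 ≤ (inner ℝ (M (v - v')) (u - u') : ℝ))
    -- `zer A ≠ ∅`
    (hzer : ∃ x : H, (x, (0 : H)) ∈ A)
    -- `T = (M+A)⁻¹ M` and `T̃ = C* (M+A)⁻¹ C`
    (T : H → H) (hT : ∀ u, T u = J (M u))
    (Tt : D → D) (hTt : ∀ w, Tt w = (ContinuousLinearMap.adjoint C) (J (C w))) :
    (ContinuousLinearMap.adjoint C) '' {u : H | T u = u} = {w : D | Tt w = w} ∧
    (∀ w : D, Tt w = w →
      T (J (C w)) = J (C w) ∧ (ContinuousLinearMap.adjoint C) (J (C w)) = w) := by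
  have key : ∀ w : D, Tt w = w →
      T (J (C w)) = J (C w) ∧ (ContinuousLinearMap.adjoint C) (J (C w)) = w := by
    intro w hw
    have hcw : (ContinuousLinearMap.adjoint C) (J (C w)) = w := by
      rw [hTt] at hw; exact hw
    have hMu : M (J (C w)) = C w := by rw [hM]; simp [hcw]
    have h0 : (J (C w), M (J (C w)) - M (J (C w))) ∈ A := by
      have := hJ (C w); rw [hMu] at this ⊢; rwa [sub_self] at this ⊢
    have heq := hJuniq (M (J (C w))) (J (C w)) h0
    exact ⟨by rw [hT]; exact heq.symm, hcw⟩
  refine ⟨?_, key⟩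
  ext w
  constructor
  · rintro ⟨u, hu, rfl⟩
    have hu' : J (M u) = u := by rw [← hT]; exact hu
    have hcu : C ((ContinuousLinearMap.adjoint C) u) = M u := by rw [hM]; rfl
    simp only [Set.mem_setOf_eq, hTt, hcu, hu']
  · intro hw
    exact ⟨J (C w), (key w hw).1, (key w hw).2⟩
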